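/- The piecewise linear map τ₁ on [0,1] defined by τ₁(x) = (4/3)x for 0 ≤ x < 3/8, τ₁(x) = 4x − 1 for 3/8 ≤ x < 1/2, τ₁(x) = −4x + 3 for 1/2 ≤ x < 5/8, and τ₁(x) = −(4/3)x + 4/3 for 5/8 ≤ x ≤ 1 preserves the absolutely continuous measure with density f₁ = (3/2)·χ_{[0,1/2]} + (1/2)·χ_{[1/2,1]}, i.e., for every measurable set A ⊆ [0,1], ∫_{τ₁⁻¹(A)} f₁ dλ = ∫_A f₁ dλ where λ is Lebesgue measure. -/

import Mathlib

open MeasureTheory Set ENNReal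

noncomputable section

/-- The lower piecewise linear map τ₁ of the motivating example. -/
def tau1 : ℝ → ℝ := fun x =>
  if x < 3/8 then (4/3) * x
  else if x < 1/2 then 4 * x - 1
  else if x < 5/8 then -4 * x + 3
  else -(4/3) * x + 4/3

/-- The invariant density f₁ = (3/2)·χ_{[0,1/2]} + (1/2)·χ_{(1/2,1]}. -/
def dens1 : ℝ → ℝ≥0∞ := fun x => if x ≤ 1/2 then 3/2 else 1/2

/-- Volume of the preimage of a set under an affine map. -/
lemma vol_affine (a b : ℝ) (ha : a ≠ 0) (S : Set ℝ) :
    volume ((fun x => a * x + b) ⁻¹' S) = ENNReal.ofReal |a⁻¹| * volume S := by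
  have h : (fun x : ℝ => a * x + b) ⁻¹' S = (a * ·) ⁻¹' ((fun y => y + b) ⁻¹' S) := rfl
  rw [h, Real.volume_preimage_mul_left ha, measure_preimage_add_right volume b S]


/-- Adding a null set does not change the volume. -/
lemma vol_union_null {s t : Set ℝ} (ht : volume t = 0) : volume (s ∪ t) = volume s :=
  le_antisymm ((measure_union_le s t).trans_eq (by rw [ht, add_zero]))
    (measure_mono subset_union_left)

/-- The final arithmetic identity in `ℝ≥0∞`. -/
lemma arith_aux (u v : ℝ≥0∞) (hu : u ≠ ⊤) (hv : v ≠ ⊤) :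
    3/2 * (ENNReal.ofReal (3/4) * u) + (3/2 * (ENNReal.ofReal (1/4) * v) +
      (0 + (1/2 * (ENNReal.ofReal (1/4) * v) + 1/2 * (ENNReal.ofReal (3/4) * u)))) =
    3/2 * u + 1/2 * v := by
  have h32 : (3/2 : ℝ≥0∞) ≠ ⊤ := (ENNReal.div_lt_top (by norm_num) (by norm_num)).ne
  have h12 : (1/2 : ℝ≥0∞) ≠ ⊤ := (ENNReal.div_lt_top (by norm_num) (by norm_num)).ne
  have t1 : 3/2 * (ENNReal.ofReal (3/4:ℝ) * u) ≠ ⊤ :=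
    ENNReal.mul_ne_top h32 (ENNReal.mul_ne_top ENNReal.ofReal_ne_top hu)
  have t2 : 3/2 * (ENNReal.ofReal (1/4:ℝ) * v) ≠ ⊤ :=
    ENNReal.mul_ne_top h32 (ENNReal.mul_ne_top ENNReal.ofReal_ne_top hv)
  have t3 : 1/2 * (ENNReal.ofReal (1/4:ℝ) * v) ≠ ⊤ :=
    ENNReal.mul_ne_top h12 (ENNReal.mul_ne_top ENNReal.ofReal_ne_top hv)
  have t4 : 1/2 * (ENNReal.ofReal (3/4:ℝ) * u) ≠ ⊤ :=
    ENNReal.mul_ne_top h12 (ENNReal.mul_ne_top ENNReal.ofReal_ne_top hu)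
  have r1 : 3/2 * u ≠ ⊤ := ENNReal.mul_ne_top h32 hu
  have r2 : 1/2 * v ≠ ⊤ := ENNReal.mul_ne_top h12 hv
  have s3 : 1/2 * (ENNReal.ofReal (1/4:ℝ) * v) + 1/2 * (ENNReal.ofReal (3/4:ℝ) * u) ≠ ⊤ :=
    ENNReal.add_ne_top.mpr ⟨t3, t4⟩
  have s0 : (0:ℝ≥0∞) + (1/2 * (ENNReal.ofReal (1/4:ℝ) * v) + 1/2 * (ENNReal.ofReal (3/4:ℝ) * u)) ≠ ⊤ :=
    ENNReal.add_ne_top.mpr ⟨ENNReal.zero_ne_top, s3⟩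
  have s2 : 3/2 * (ENNReal.ofReal (1/4:ℝ) * v) +
      ((0:ℝ≥0∞) + (1/2 * (ENNReal.ofReal (1/4:ℝ) * v) + 1/2 * (ENNReal.ofReal (3/4:ℝ) * u))) ≠ ⊤ :=
    ENNReal.add_ne_top.mpr ⟨t2, s0⟩
  refine (ENNReal.toReal_eq_toReal_iff' (ENNReal.add_ne_top.mpr ⟨t1, s2⟩)
    (ENNReal.add_ne_top.mpr ⟨r1, r2⟩)).mp ?_
  rw [ENNReal.toReal_add t1 s2, ENNReal.toReal_add t2 s0,
    ENNReal.toReal_add ENNReal.zero_ne_top s3, ENNReal.toReal_add t3 t4,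
    ENNReal.toReal_add r1 r2]
  simp only [ENNReal.toReal_mul, ENNReal.toReal_div, ENNReal.toReal_ofNat, ENNReal.toReal_one,
    ENNReal.toReal_zero, ENNReal.toReal_ofReal (show (0:ℝ) ≤ 3/4 by norm_num),
    ENNReal.toReal_ofReal (show (0:ℝ) ≤ 1/4 by norm_num)]
  ring

/-- τ₁ preserves the absolutely continuous measure with density f₁. -/
theorem stmt0 :
    ∀ A : Set ℝ, MeasurableSet A → A ⊆ Set.Icc (0:ℝ) 1 →
      ∫⁻ x in Set.Icc (0:ℝ) 1 ∩ tau1 ⁻¹' A, dens1 x = ∫⁻ x in A, dens1 x := by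
  intro A hA hA01
  -- the five pieces of the domain
  set T : Set ℝ := tau1 ⁻¹' A with hT
  have hS1 : Ico (0:ℝ) (3/8) ∩ T = (fun x => (4/3) * x + 0) ⁻¹' (A ∩ Ico 0 (1/2)) := by
    ext x
    simp only [hT, mem_inter_iff, mem_Ico, mem_preimage, add_zero]
    constructor
    · rintro ⟨⟨h0, h1⟩, hAx⟩
      have ht : tau1 x = (4/3) * x := by simp only [tau1, if_pos h1]
      rw [ht] at hAx
      exact ⟨hAx, by linarith, by linarith⟩
    · rintro ⟨hAx, h0, h1⟩
      have hx1 : x < 3/8 := by linarith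
      have ht : tau1 x = (4/3) * x := by simp only [tau1, if_pos hx1]
      exact ⟨⟨by linarith, hx1⟩, by rw [ht]; exact hAx⟩
  have hS2 : Ico (3/8:ℝ) (1/2) ∩ T = (fun x => 4 * x + (-1)) ⁻¹' (A ∩ Ico (1/2) 1) := by
    ext x
    simp only [hT, mem_inter_iff, mem_Ico, mem_preimage]
    constructor
    · rintro ⟨⟨h0, h1⟩, hAx⟩
      have ht : tau1 x = 4 * x - 1 := by
        simp only [tau1]; rw [if_neg (by linarith), if_pos h1]
      rw [ht] at hAx
      refine ⟨by rwa [show 4 * x + (-1) = 4 * x - 1 by ring], by linarith, by linarith⟩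
    · rintro ⟨hAx, h0, h1⟩
      have hx0 : 3/8 ≤ x := by linarith
      have hx1 : x < 1/2 := by linarith
      have ht : tau1 x = 4 * x - 1 := by
        simp only [tau1]; rw [if_neg (by linarith), if_pos hx1]
      exact ⟨⟨hx0, hx1⟩, by rw [ht, show 4 * x - 1 = 4 * x + (-1) by ring]; exact hAx⟩
  have hS3 : Ioo (1/2:ℝ) (5/8) ∩ T = (fun x => -4 * x + 3) ⁻¹' (A ∩ Ioo (1/2) 1) := by
    ext x
    simp only [hT, mem_inter_iff, mem_Ioo, mem_preimage]
    constructor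
    · rintro ⟨⟨h0, h1⟩, hAx⟩
      have ht : tau1 x = -4 * x + 3 := by
        simp only [tau1]; rw [if_neg (by linarith), if_neg (by linarith), if_pos h1]
      rw [ht] at hAx
      exact ⟨hAx, by linarith, by linarith⟩
    · rintro ⟨hAx, h0, h1⟩
      have hx0 : 1/2 < x := by linarith
      have hx1 : x < 5/8 := by linarith
      have ht : tau1 x = -4 * x + 3 := by
        simp only [tau1]; rw [if_neg (by linarith), if_neg (by linarith), if_pos hx1]
      exact ⟨⟨hx0, hx1⟩, by rw [ht]; exact hAx⟩
  have hS4 : Icc (5/8:ℝ) 1 ∩ T = (fun x => -(4/3) * x + 4/3) ⁻¹' (A ∩ Icc 0 (1/2)) := by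
    ext x
    simp only [hT, mem_inter_iff, mem_Icc, mem_preimage]
    constructor
    · rintro ⟨⟨h0, h1⟩, hAx⟩
      have ht : tau1 x = -(4/3) * x + 4/3 := by
        simp only [tau1]
        rw [if_neg (by linarith), if_neg (by linarith), if_neg (by linarith)]
      rw [ht] at hAx
      exact ⟨hAx, by linarith, by linarith⟩
    · rintro ⟨hAx, h0, h1⟩
      have hx0 : 5/8 ≤ x := by linarith
      have hx1 : x ≤ 1 := by linarith
      have ht : tau1 x = -(4/3) * x + 4/3 := by
        simp only [tau1]
        rw [if_neg (by linarith), if_neg (by linarith), if_neg (by linarith)]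
      exact ⟨⟨hx0, hx1⟩, by rw [ht]; exact hAx⟩
  -- partition of [0,1]
  have hpart : Icc (0:ℝ) 1 ∩ T =
      (Ico (0:ℝ) (3/8) ∩ T) ∪ ((Ico (3/8:ℝ) (1/2) ∩ T) ∪ (({(1/2:ℝ)} ∩ T) ∪
        ((Ioo (1/2:ℝ) (5/8) ∩ T) ∪ (Icc (5/8:ℝ) 1 ∩ T)))) := by
    have : Icc (0:ℝ) 1 =
        Ico (0:ℝ) (3/8) ∪ (Ico (3/8:ℝ) (1/2) ∪ ({(1/2:ℝ)} ∪
          (Ioo (1/2:ℝ) (5/8) ∪ Icc (5/8:ℝ) 1))) := by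
      ext x
      simp only [mem_Icc, mem_union, mem_Ico, mem_singleton_iff, mem_Ioo]
      constructor
      · rintro ⟨h0, h1⟩
        rcases lt_or_ge x (3/8) with h | h
        · exact Or.inl ⟨h0, h⟩
        rcases lt_or_ge x (1/2) with h' | h'
        · exact Or.inr (Or.inl ⟨h, h'⟩)
        rcases h'.eq_or_lt with he | he
        · exact Or.inr (Or.inr (Or.inl he.symm))
        rcases lt_or_ge x (5/8) with h'' | h''
        · exact Or.inr (Or.inr (Or.inr (Or.inl ⟨he, h''⟩)))
        · exact Or.inr (Or.inr (Or.inr (Or.inr ⟨h'', h1⟩)))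
      · rintro (⟨a, b⟩ | ⟨a, b⟩ | rfl | ⟨a, b⟩ | ⟨a, b⟩) <;> constructor <;> linarith
    rw [this, union_inter_distrib_right, union_inter_distrib_right,
      union_inter_distrib_right, union_inter_distrib_right]
  -- measurability of the pieces
  have m1 : MeasurableSet (Ico (0:ℝ) (3/8) ∩ T) := by
    rw [hS1]
    exact (by fun_prop : Measurable fun x : ℝ => (4/3) * x + 0)
      (hA.inter measurableSet_Ico)
  have m2 : MeasurableSet (Ico (3/8:ℝ) (1/2) ∩ T) := by
    rw [hS2]
    exact (by fun_prop : Measurable fun x : ℝ => 4 * x + (-1))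
      (hA.inter measurableSet_Ico)
  have m0 : MeasurableSet ({(1/2:ℝ)} ∩ T) :=
    ((countable_singleton (1/2:ℝ)).mono inter_subset_left).measurableSet
  have m3 : MeasurableSet (Ioo (1/2:ℝ) (5/8) ∩ T) := by
    rw [hS3]
    exact (by fun_prop : Measurable fun x : ℝ => -4 * x + 3)
      (hA.inter measurableSet_Ioo)
  have m4 : MeasurableSet (Icc (5/8:ℝ) 1 ∩ T) := by
    rw [hS4]
    exact (by fun_prop : Measurable fun x : ℝ => -(4/3) * x + 4/3)
      (hA.inter measurableSet_Icc)
  -- disjointness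
  have d34 : Disjoint (Ioo (1/2:ℝ) (5/8) ∩ T) (Icc (5/8:ℝ) 1 ∩ T) := by
    rw [disjoint_left]; rintro x ⟨⟨_, h⟩, _⟩ ⟨⟨h', _⟩, _⟩; linarith
  have d0 : Disjoint ({(1/2:ℝ)} ∩ T) ((Ioo (1/2:ℝ) (5/8) ∩ T) ∪ (Icc (5/8:ℝ) 1 ∩ T)) := by
    rw [disjoint_left]
    rintro x ⟨rfl, _⟩ (⟨⟨h, _⟩, _⟩ | ⟨⟨h, _⟩, _⟩) <;> linarith
  have d2 : Disjoint (Ico (3/8:ℝ) (1/2) ∩ T)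
      (({(1/2:ℝ)} ∩ T) ∪ ((Ioo (1/2:ℝ) (5/8) ∩ T) ∪ (Icc (5/8:ℝ) 1 ∩ T))) := by
    rw [disjoint_left]
    rintro x ⟨⟨_, h⟩, _⟩ (⟨rfl, _⟩ | ⟨⟨h', _⟩, _⟩ | ⟨⟨h', _⟩, _⟩) <;> linarith
  have d1 : Disjoint (Ico (0:ℝ) (3/8) ∩ T)
      ((Ico (3/8:ℝ) (1/2) ∩ T) ∪ (({(1/2:ℝ)} ∩ T) ∪
        ((Ioo (1/2:ℝ) (5/8) ∩ T) ∪ (Icc (5/8:ℝ) 1 ∩ T)))) := by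
    rw [disjoint_left]
    rintro x ⟨⟨_, h⟩, _⟩ (⟨⟨h', _⟩, _⟩ | ⟨rfl, _⟩ | ⟨⟨h', _⟩, _⟩ | ⟨⟨h', _⟩, _⟩) <;> linarith
  -- split the left-hand side
  rw [hpart, lintegral_union (m2.union (m0.union (m3.union m4))) d1,
    lintegral_union (m0.union (m3.union m4)) d2,
    lintegral_union (m3.union m4) d0,
    lintegral_union m4 d34]
  -- singleton piece vanishes
  have e0 : ∫⁻ x in ({(1/2:ℝ)} ∩ T), dens1 x = 0 :=
    setLIntegral_measure_zero _ _
      (measure_mono_null inter_subset_left Real.volume_singleton)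
  -- each branch integral
  have e1 : ∫⁻ x in (Ico (0:ℝ) (3/8) ∩ T), dens1 x =
      3/2 * (ENNReal.ofReal |((4:ℝ)/3)⁻¹| * volume (A ∩ Ico 0 (1/2))) := by
    rw [show ∫⁻ x in (Ico (0:ℝ) (3/8) ∩ T), dens1 x
        = ∫⁻ _ in (Ico (0:ℝ) (3/8) ∩ T), (3/2 : ℝ≥0∞) from
      setLIntegral_congr_fun m1 (fun x hx => by
        simp only [dens1]; rw [if_pos (by linarith [hx.1.2] : x ≤ 1/2)]),
      setLIntegral_const, hS1, vol_affine _ _ (by norm_num)]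
  have e2 : ∫⁻ x in (Ico (3/8:ℝ) (1/2) ∩ T), dens1 x =
      3/2 * (ENNReal.ofReal |((4:ℝ))⁻¹| * volume (A ∩ Ico (1/2) 1)) := by
    rw [show ∫⁻ x in (Ico (3/8:ℝ) (1/2) ∩ T), dens1 x
        = ∫⁻ _ in (Ico (3/8:ℝ) (1/2) ∩ T), (3/2 : ℝ≥0∞) from
      setLIntegral_congr_fun m2 (fun x hx => by
        simp only [dens1]; rw [if_pos (by linarith [hx.1.2] : x ≤ 1/2)]),
      setLIntegral_const, hS2, vol_affine _ _ (by norm_num)]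
  have e3 : ∫⁻ x in (Ioo (1/2:ℝ) (5/8) ∩ T), dens1 x =
      1/2 * (ENNReal.ofReal |(-4:ℝ)⁻¹| * volume (A ∩ Ioo (1/2) 1)) := by
    rw [show ∫⁻ x in (Ioo (1/2:ℝ) (5/8) ∩ T), dens1 x
        = ∫⁻ _ in (Ioo (1/2:ℝ) (5/8) ∩ T), (1/2 : ℝ≥0∞) from
      setLIntegral_congr_fun m3 (fun x hx => by
        simp only [dens1]; rw [if_neg (by push_neg; linarith [hx.1.1])]),
      setLIntegral_const, hS3, vol_affine _ _ (by norm_num)]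
  have e4 : ∫⁻ x in (Icc (5/8:ℝ) 1 ∩ T), dens1 x =
      1/2 * (ENNReal.ofReal |(-((4:ℝ)/3))⁻¹| * volume (A ∩ Icc 0 (1/2))) := by
    rw [show ∫⁻ x in (Icc (5/8:ℝ) 1 ∩ T), dens1 x
        = ∫⁻ _ in (Icc (5/8:ℝ) 1 ∩ T), (1/2 : ℝ≥0∞) from
      setLIntegral_congr_fun m4 (fun x hx => by
        simp only [dens1]; rw [if_neg (by push_neg; linarith [hx.1.1])]),
      setLIntegral_const, hS4, vol_affine _ _ (by norm_num)]
  rw [e0, e1, e2, e3, e4]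
  -- split the right-hand side
  have hAsplit : A = (A ∩ Iic (1/2)) ∪ (A ∩ Ioi (1/2)) := by
    rw [← inter_union_distrib_left, Iic_union_Ioi, inter_univ]
  have dr : Disjoint (A ∩ Iic (1/2:ℝ)) (A ∩ Ioi (1/2:ℝ)) := by
    rw [disjoint_left]; rintro x ⟨_, h⟩ ⟨_, h'⟩
    exact absurd (show x ≤ 1/2 from h) (not_le.mpr h')
  have er1 : ∫⁻ x in (A ∩ Iic (1/2:ℝ)), dens1 x = 3/2 * volume (A ∩ Iic (1/2)) := by
    rw [show ∫⁻ x in (A ∩ Iic (1/2:ℝ)), dens1 x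
        = ∫⁻ _ in (A ∩ Iic (1/2:ℝ)), (3/2 : ℝ≥0∞) from
      setLIntegral_congr_fun (hA.inter measurableSet_Iic) (fun x hx => by
        simp only [dens1]; rw [if_pos (show x ≤ 1/2 from hx.2)]),
      setLIntegral_const]
  have er2 : ∫⁻ x in (A ∩ Ioi (1/2:ℝ)), dens1 x = 1/2 * volume (A ∩ Ioi (1/2)) := by
    rw [show ∫⁻ x in (A ∩ Ioi (1/2:ℝ)), dens1 x
        = ∫⁻ _ in (A ∩ Ioi (1/2:ℝ)), (1/2 : ℝ≥0∞) from
      setLIntegral_congr_fun (hA.inter measurableSet_Ioi) (fun x hx => by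
        simp only [dens1]; rw [if_neg (not_le.mpr (show 1/2 < x from hx.2))]),
      setLIntegral_const]
  conv_rhs => rw [hAsplit]
  rw [lintegral_union (hA.inter measurableSet_Ioi) dr, er1, er2]
  -- identify the various volumes
  have hv1 : volume (A ∩ Iic (1/2:ℝ)) = volume (A ∩ Ico 0 (1/2)) := by
    have : A ∩ Iic (1/2:ℝ) = (A ∩ Ico 0 (1/2)) ∪ (A ∩ {(1/2:ℝ)}) := by
      ext x
      simp only [mem_inter_iff, mem_Iic, mem_union, mem_Ico, mem_singleton_iff]
      constructor
      · rintro ⟨hx, h⟩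
        rcases h.lt_or_eq with h' | h'
        · exact Or.inl ⟨hx, (hA01 hx).1, h'⟩
        · exact Or.inr ⟨hx, h'⟩
      · rintro (⟨hx, _, h⟩ | ⟨hx, rfl⟩)
        · exact ⟨hx, h.le⟩
        · exact ⟨hx, le_refl _⟩
    rw [this, vol_union_null (measure_mono_null inter_subset_right Real.volume_singleton)]
  have hv4 : volume (A ∩ Icc (0:ℝ) (1/2)) = volume (A ∩ Iic (1/2)) := by
    congr 1
    ext x
    simp only [mem_inter_iff, mem_Icc, mem_Iic]
    exact ⟨fun ⟨hx, _, h⟩ => ⟨hx, h⟩, fun ⟨hx, h⟩ => ⟨hx, (hA01 hx).1, h⟩⟩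
  have hv2 : volume (A ∩ Ico (1/2:ℝ) 1) = volume (A ∩ Ioo (1/2) 1) := by
    have : A ∩ Ico (1/2:ℝ) 1 = (A ∩ Ioo (1/2) 1) ∪ (A ∩ {(1/2:ℝ)}) := by
      ext x
      simp only [mem_inter_iff, mem_Ico, mem_union, mem_Ioo, mem_singleton_iff]
      constructor
      · rintro ⟨hx, h, h'⟩
        rcases h.lt_or_eq with h'' | h''
        · exact Or.inl ⟨hx, h'', h'⟩
        · exact Or.inr ⟨hx, h''.symm⟩
      · rintro (⟨hx, h, h'⟩ | ⟨hx, rfl⟩)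
        · exact ⟨hx, h.le, h'⟩
        · exact ⟨hx, le_refl _, by norm_num⟩
    rw [this, vol_union_null (measure_mono_null inter_subset_right Real.volume_singleton)]
  have hvb : volume (A ∩ Ioi (1/2:ℝ)) = volume (A ∩ Ioo (1/2) 1) := by
    have : A ∩ Ioi (1/2:ℝ) = (A ∩ Ioo (1/2) 1) ∪ (A ∩ {(1:ℝ)}) := by
      ext x
      simp only [mem_inter_iff, mem_Ioi, mem_union, mem_Ioo, mem_singleton_iff]
      constructor
      · rintro ⟨hx, h⟩
        rcases (hA01 hx).2.lt_or_eq with h' | h'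
        · exact Or.inl ⟨hx, h, h'⟩
        · exact Or.inr ⟨hx, h'⟩
      · rintro (⟨hx, h, _⟩ | ⟨hx, rfl⟩)
        · exact ⟨hx, h⟩
        · exact ⟨hx, by norm_num⟩
    rw [this, vol_union_null (measure_mono_null inter_subset_right Real.volume_singleton)]
  rw [hv1, hv4, hv2, hvb, hv1]
  -- finite arithmetic in ℝ≥0∞
  set u := volume (A ∩ Ico (0:ℝ) (1/2)) with hu
  set v := volume (A ∩ Ioo (1/2:ℝ) 1) with hv
  have hu_top : u ≠ ⊤ := by
    refine (lt_of_le_of_lt (measure_mono inter_subset_right) ?_).ne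
    rw [Real.volume_Ico]; exact ofReal_lt_top
  have hv_top : v ≠ ⊤ := by
    refine (lt_of_le_of_lt (measure_mono inter_subset_right) ?_).ne
    rw [Real.volume_Ioo]; exact ofReal_lt_top
  have h_a : |((4:ℝ)/3)⁻¹| = 3/4 := by
    rw [abs_inv, abs_of_nonneg (by norm_num : (0:ℝ) ≤ 4/3)]; norm_num
  have h_b : |((4:ℝ))⁻¹| = 1/4 := by
    rw [abs_inv, abs_of_nonneg (by norm_num : (0:ℝ) ≤ 4)]; norm_num
  have h_c : |((-4:ℝ))⁻¹| = 1/4 := by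
    rw [abs_inv, abs_neg, abs_of_nonneg (by norm_num : (0:ℝ) ≤ 4)]; norm_num
  have h_d : |(-((4:ℝ)/3))⁻¹| = 3/4 := by
    rw [abs_inv, abs_neg, abs_of_nonneg (by norm_num : (0:ℝ) ≤ 4/3)]; norm_num
  rw [h_a, h_b, h_c, h_d, show ((3:ℝ)/4) = 3/4 from rfl, show ((1:ℝ)/4) = 1/4 from rfl]
  exact arith_aux u v hu_top hv_top
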